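/- arXiv:2605.03753 — 3 statements merged into one kernel-verified Lean document; each statement's English description precedes it below -/
import Mathlib

section
/- For integers n ≥ 1, d_max ≥ 0, and 0 ≤ l_max ≤ n−1, the number of triples (d, M, R), where d is an integer with 0 ≤ d ≤ d_max, M is a block configuration of the horizon T = {0,1,…,n−1} consisting of at most l_max + 1 blocks, and R ⊆ M is a subset such that no two blocks of R are adjacent, equals (d_max + 1) · Σ_{l=0}^{l_max} C(n−1, l) · F_{l+3}. -/
open scoped Classical

/-- A block in the horizon `{0,1,…,n-1}`: a nonempty set of consecutive integers
contained in `Finset.range n`. -/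
def IsBlock (n : ℕ) (B : Finset ℕ) : Prop :=
  (∃ a b : ℕ, a ≤ b ∧ B = Finset.Icc a b) ∧ B ⊆ Finset.range n

/-- A block configuration of the horizon `{0,1,…,n-1}`: a finite collection of
pairwise disjoint blocks whose union is the whole horizon. -/
def IsBlockConfig (n : ℕ) (M : Finset (Finset ℕ)) : Prop :=
  (∀ B ∈ M, IsBlock n B) ∧
  (M : Set (Finset ℕ)).PairwiseDisjoint id ∧
  M.sup id = Finset.range n

/-- `B` immediately precedes `B'`. -/
def Precedes (B B' : Finset ℕ) : Prop :=
  ∃ t ∈ B, (∀ u ∈ B, u ≤ t) ∧ (t + 1) ∈ B' ∧ (∀ u ∈ B', t + 1 ≤ u)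

/-- Two blocks are adjacent if the end point of one immediately precedes the start
point of the other. -/
def AdjBlocks (B B' : Finset ℕ) : Prop := Precedes B B' ∨ Precedes B' B

theorem indep_count' (u : Finset ℕ) :
    ((u.powerset.filter (fun r => ∀ a ∈ r, ∀ b ∈ r, a < b → ∃ c ∈ u, a < c ∧ c < b)).card)
      = Nat.fib (u.card + 2) := by
  induction u using Finset.strongInduction with
  | _ u ih =>
    rcases Nat.lt_or_ge u.card 2 with hm | hm
    · interval_cases h : u.card
      · rw [Finset.card_eq_zero] at h
        subst h
        simp [Finset.filter_singleton]
      · rw [Finset.card_eq_one] at h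
        obtain ⟨x, rfl⟩ := h
        rw [show Nat.fib (1+2) = 2 by rfl]
        have heq : (Finset.filter
            (fun r => ∀ a ∈ r, ∀ b ∈ r, a < b → ∃ c ∈ ({x} : Finset ℕ), a < c ∧ c < b)
            ({x} : Finset ℕ).powerset) = {∅, {x}} := by
          ext r
          simp only [Finset.mem_filter, Finset.mem_powerset, Finset.subset_singleton_iff,
            Finset.mem_insert, Finset.mem_singleton]
          constructor
          · rintro ⟨h, _⟩; exact h
          · rintro h
            refine ⟨h, ?_⟩
            intro a ha b hb hab
            rcases h with rfl | rfl
            · simp at ha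
            · simp only [Finset.mem_singleton] at ha hb; omega
        rw [heq, Finset.card_insert_of_notMem (by
          simp only [Finset.mem_singleton]
          exact fun h => Finset.singleton_ne_empty x h.symm), Finset.card_singleton]
    · -- u.card ≥ 2
      have hne : u.Nonempty := Finset.card_pos.mp (by omega)
      set M := u.max' hne with hM
      have hMu : M ∈ u := u.max'_mem hne
      set u' := u.erase M with hu'
      have hu'card : u'.card = u.card - 1 := Finset.card_erase_of_mem hMu
      have hne' : u'.Nonempty := Finset.card_pos.mp (by omega)
      set p := u'.max' hne' with hp
      have hpu' : p ∈ u' := u'.max'_mem hne'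
      have hpu : p ∈ u := Finset.mem_of_mem_erase hpu'
      have hpM : p < M := lt_of_le_of_ne (u.le_max' p hpu) (Finset.ne_of_mem_erase hpu')
      set u'' := u'.erase p with hu''
      have hu''card : u''.card = u.card - 2 := by
        rw [hu'', Finset.card_erase_of_mem hpu', hu'card]
        omega
      have hlt' : ∀ x ∈ u', x ≤ p := fun x hx => u'.le_max' x hx
      have hltM : ∀ x ∈ u, x ≤ M := fun x hx => u.le_max' x hx
      have hsplit := Finset.card_filter_add_card_filter_not
        (s := u.powerset.filter (fun r => ∀ a ∈ r, ∀ b ∈ r, a < b → ∃ c ∈ u, a < c ∧ c < b))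
        (p := fun r => M ∈ r)
      -- count of those not containing M
      have hA : ((u.powerset.filter
            (fun r => ∀ a ∈ r, ∀ b ∈ r, a < b → ∃ c ∈ u, a < c ∧ c < b)).filter
              (fun r => ¬ M ∈ r))
          = u'.powerset.filter (fun r => ∀ a ∈ r, ∀ b ∈ r, a < b → ∃ c ∈ u', a < c ∧ c < b) := by
        ext r
        simp only [Finset.mem_filter, Finset.mem_powerset, and_assoc]
        constructor
        · rintro ⟨hru, hPr, hMr⟩
          have hru' : r ⊆ u' := fun x hx =>
            Finset.mem_erase.mpr ⟨fun hxM => hMr (hxM ▸ hx), hru hx⟩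
          refine ⟨hru', fun a ha b hb hab => ?_⟩
          obtain ⟨c, hcu, hac, hcb⟩ := hPr a ha b hb hab
          have hbM : b < M := lt_of_le_of_ne (hltM b (hru hb))
            (Finset.ne_of_mem_erase (hru' hb))
          exact ⟨c, Finset.mem_erase.mpr ⟨by omega, hcu⟩, hac, hcb⟩
        · rintro ⟨hru', hPr⟩
          refine ⟨fun x hx => Finset.mem_of_mem_erase (hru' hx),
            fun a ha b hb hab => ?_, fun hMr => (Finset.notMem_erase M u) (hru' hMr)⟩
          obtain ⟨c, hcu, hac, hcb⟩ := hPr a ha b hb hab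
          exact ⟨c, Finset.mem_of_mem_erase hcu, hac, hcb⟩
      -- count of those containing M
      have hB : (((u.powerset.filter
            (fun r => ∀ a ∈ r, ∀ b ∈ r, a < b → ∃ c ∈ u, a < c ∧ c < b)).filter
              (fun r => M ∈ r))).card
          = (u''.powerset.filter
              (fun r => ∀ a ∈ r, ∀ b ∈ r, a < b → ∃ c ∈ u'', a < c ∧ c < b)).card := by
        refine Finset.card_bij' (fun r _ => r.erase M) (fun r _ => insert M r)
          ?_ ?_ ?_ ?_
        · -- maps into target
          intro r hr
          simp only [Finset.mem_filter, Finset.mem_powerset] at hr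
          obtain ⟨⟨hru, hPr⟩, hMr⟩ := hr
          have hpr : p ∉ r := by
            intro hpr
            obtain ⟨c, hcu, hpc, hcM⟩ := hPr p hpr M hMr hpM
            have : c ∈ u' := Finset.mem_erase.mpr ⟨by omega, hcu⟩
            have := hlt' c this
            omega
          simp only [Finset.mem_filter, Finset.mem_powerset]
          constructor
          · intro x hx
            obtain ⟨hxM, hxu⟩ := Finset.mem_erase.mp hx
            refine Finset.mem_erase.mpr ⟨?_, Finset.mem_erase.mpr ⟨hxM, hru hxu⟩⟩
            intro hxp; exact hpr (hxp ▸ hxu)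
          · intro a ha b hb hab
            have hbr := Finset.mem_of_mem_erase hb
            obtain ⟨c, hcu, hac, hcb⟩ := hPr a (Finset.mem_of_mem_erase ha) b hbr hab
            have hbu' : b ∈ u' := Finset.mem_erase.mpr ⟨(Finset.mem_erase.mp hb).1, hru hbr⟩
            have hbp : b < p := lt_of_le_of_ne (hlt' b hbu') (fun h => hpr (h ▸ hbr))
            exact ⟨c, Finset.mem_erase.mpr ⟨by omega,
              Finset.mem_erase.mpr ⟨by omega, hcu⟩⟩, hac, hcb⟩
        · -- inverse maps into source
          intro r hr
          simp only [Finset.mem_filter, Finset.mem_powerset] at hr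
          obtain ⟨hru, hPr⟩ := hr
          have hsub' : ∀ x ∈ u'', x ∈ u := fun x hx =>
            Finset.mem_of_mem_erase (Finset.mem_of_mem_erase hx)
          have hsub : ∀ x ∈ r, x ∈ u := fun x hx => hsub' x (hru hx)
          have hbound : ∀ x ∈ r, x < p := by
            intro x hx
            have hxu'' := hru hx
            have := hlt' x (Finset.mem_of_mem_erase hxu'')
            have := (Finset.mem_erase.mp hxu'').1
            omega
          simp only [Finset.mem_filter, Finset.mem_powerset]
          refine ⟨⟨?_, ?_⟩, Finset.mem_insert_self M r⟩
          · intro x hx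
            rcases Finset.mem_insert.mp hx with rfl | hx
            · exact hMu
            · exact hsub x hx
          · intro a ha b hb hab
            rcases Finset.mem_insert.mp ha with rfl | ha
            · rcases Finset.mem_insert.mp hb with rfl | hb
              · omega
              · have := hbound b hb; omega
            · rcases Finset.mem_insert.mp hb with rfl | hb
              · exact ⟨p, hpu, hbound a ha, hpM⟩
              · obtain ⟨c, hcu, hac, hcb⟩ := hPr a ha b hb hab
                exact ⟨c, hsub' c hcu, hac, hcb⟩
        · intro r hr
          simp only [Finset.mem_filter] at hr
          exact Finset.insert_erase hr.2
        · intro r hr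
          simp only [Finset.mem_filter, Finset.mem_powerset] at hr
          apply Finset.erase_insert
          intro hMr
          have h1 := hr.1 hMr
          have h2 := (Finset.mem_erase.mp (Finset.mem_of_mem_erase h1)).1
          exact h2 rfl
      -- assemble
      have ihA := ih u' (Finset.erase_ssubset hMu)
      have ihB := ih u'' (lt_of_lt_of_le (Finset.erase_ssubset hpu') (Finset.erase_subset M u))
      rw [hA, ihA, hB, ihB] at hsplit
      obtain ⟨k, hk⟩ : ∃ k, u.card = k + 2 := ⟨u.card - 2, by omega⟩
      rw [hu''card, hu'card, hk] at hsplit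
      have e1 : k + 2 - 2 + 2 = k + 2 := by omega
      have e2 : k + 2 - 1 + 2 = k + 3 := by omega
      rw [e1, e2] at hsplit
      rw [hk, ← hsplit, Nat.fib_add_two (n := k + 2)]

/-- the next cut after `a` -/
noncomputable def nxt (n : ℕ) (s : Finset ℕ) (a : ℕ) : ℕ :=
  if h : ((insert n s).filter (fun c => a < c)).Nonempty then
    ((insert n s).filter (fun c => a < c)).min' h else n

noncomputable def blk (n : ℕ) (s : Finset ℕ) (a : ℕ) : Finset ℕ :=
  Finset.Icc a (nxt n s a - 1)

noncomputable def blocks (n : ℕ) (s : Finset ℕ) : Finset (Finset ℕ) :=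
  (insert 0 s).image (blk n s)

section basic
variable {n : ℕ} {s : Finset ℕ} {a : ℕ}

lemma nxt_def (ha : a < n) :
    a < nxt n s a ∧ nxt n s a ∈ insert n s ∧ ∀ c ∈ insert n s, a < c → nxt n s a ≤ c := by
  have hne : ((insert n s).filter (fun c => a < c)).Nonempty :=
    ⟨n, Finset.mem_filter.mpr ⟨Finset.mem_insert_self n s, ha⟩⟩
  rw [nxt, dif_pos hne]
  have hmem := Finset.min'_mem _ hne
  rw [Finset.mem_filter] at hmem
  exact ⟨hmem.2, hmem.1, fun c hc hac =>
    Finset.min'_le _ c (Finset.mem_filter.mpr ⟨hc, hac⟩)⟩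

lemma nxt_gt (ha : a < n) : a < nxt n s a := (nxt_def ha).1

lemma nxt_le (ha : a < n) : nxt n s a ≤ n :=
  (nxt_def ha).2.2 n (Finset.mem_insert_self n s) ha

lemma nxt_no_mid (ha : a < n) {c : ℕ} (hc : c ∈ insert n s) (h1 : a < c)
    (h2 : c < nxt n s a) : False := by
  have := (nxt_def ha).2.2 c hc h1
  omega

lemma mem_blk (ha : a < n) {t : ℕ} : t ∈ blk n s a ↔ a ≤ t ∧ t < nxt n s a := by
  have := nxt_gt (s := s) ha
  rw [blk, Finset.mem_Icc]
  omega

lemma mem_blk_self (ha : a < n) : a ∈ blk n s a :=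
  (mem_blk ha).mpr ⟨le_refl a, nxt_gt ha⟩

lemma blk_subset_range (ha : a < n) : blk n s a ⊆ Finset.range n := by
  intro t ht
  rw [mem_blk ha] at ht
  have := nxt_le (s := s) ha
  rw [Finset.mem_range]
  omega

lemma blk_isBlock (ha : a < n) : IsBlock n (blk n s a) := by
  refine ⟨⟨a, nxt n s a - 1, ?_, rfl⟩, blk_subset_range ha⟩
  have := nxt_gt (s := s) ha
  omega

lemma blk_inj {s' : Finset ℕ} (ha : a < n) {a' : ℕ} (ha' : a' < n)
    (h : blk n s a = blk n s' a') : a = a' := by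
  have h1 := mem_blk_self (s := s) ha
  have h2 := mem_blk_self (s := s') ha'
  rw [h, mem_blk ha'] at h1
  rw [← h, mem_blk ha] at h2
  omega

end basic

section withsub
variable {n : ℕ} {s : Finset ℕ}

lemma mem_lt_n (hn : 1 ≤ n) (hs : s ⊆ Finset.Icc 1 (n-1)) : ∀ a ∈ insert 0 s, a < n := by
  intro a ha
  rcases Finset.mem_insert.mp ha with rfl | ha
  · omega
  · have := hs ha
    rw [Finset.mem_Icc] at this
    omega

lemma blk_disjoint_lt (hn : 1 ≤ n) (hs : s ⊆ Finset.Icc 1 (n-1)) {a a' : ℕ}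
    (ha : a ∈ insert 0 s) (ha' : a' ∈ insert 0 s)
    (h : a < a') : Disjoint (blk n s a) (blk n s a') := by
  have han : a < n := mem_lt_n hn hs a ha
  have ha'n : a' < n := mem_lt_n hn hs a' ha'
  have ha's : a' ∈ insert n s := by
    rcases Finset.mem_insert.mp ha' with rfl | h'
    · omega
    · exact Finset.mem_insert_of_mem h'
  have hnxt : nxt n s a ≤ a' := (nxt_def han).2.2 a' ha's h
  rw [Finset.disjoint_left]
  intro t ht ht'
  rw [mem_blk han] at ht
  rw [mem_blk ha'n] at ht'
  omega

lemma blk_disjoint (hn : 1 ≤ n) (hs : s ⊆ Finset.Icc 1 (n-1)) {a a' : ℕ}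
    (ha : a ∈ insert 0 s) (ha' : a' ∈ insert 0 s)
    (hne : a ≠ a') : Disjoint (blk n s a) (blk n s a') := by
  rcases lt_trichotomy a a' with h | h | h
  · exact blk_disjoint_lt hn hs ha ha' h
  · exact absurd h hne
  · exact (blk_disjoint_lt hn hs ha' ha h).symm

lemma blk_cover (hn : 1 ≤ n) (hs : s ⊆ Finset.Icc 1 (n-1)) {t : ℕ} (ht : t < n) : ∃ a ∈ insert 0 s, t ∈ blk n s a := by
  have hne : ((insert 0 s).filter (fun c => c ≤ t)).Nonempty :=
    ⟨0, Finset.mem_filter.mpr ⟨Finset.mem_insert_self 0 s, Nat.zero_le t⟩⟩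
  set a := ((insert 0 s).filter (fun c => c ≤ t)).max' hne with hadef
  have hmem := Finset.max'_mem _ hne
  rw [Finset.mem_filter] at hmem
  obtain ⟨has, hat⟩ := hmem
  have han : a < n := mem_lt_n hn hs a has
  refine ⟨a, has, (mem_blk han).mpr ⟨hat, ?_⟩⟩
  by_contra hcon
  push_neg at hcon
  -- nxt n s a ≤ t < n, and nxt ∈ insert n s, so nxt ∈ s
  have h1 := (nxt_def (s := s) han).2.1
  have h2 := nxt_gt (s := s) han
  have hnn : nxt n s a ≠ n := by omega
  have hins : nxt n s a ∈ s := by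
    rcases Finset.mem_insert.mp h1 with h | h
    · omega
    · exact h
  have : nxt n s a ∈ (insert 0 s).filter (fun c => c ≤ t) :=
    Finset.mem_filter.mpr ⟨Finset.mem_insert_of_mem hins, by omega⟩
  have := Finset.le_max' _ _ this
  omega

lemma blocks_isConfig (hn : 1 ≤ n) (hs : s ⊆ Finset.Icc 1 (n-1)) : IsBlockConfig n (blocks n s) := by
  refine ⟨?_, ?_, ?_⟩
  · intro B hB
    obtain ⟨a, ha, rfl⟩ := Finset.mem_image.mp hB
    exact blk_isBlock (mem_lt_n hn hs a ha)
  · intro B hB B' hB' hne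
    simp only [blocks, Finset.coe_image, Set.mem_image] at hB hB'
    obtain ⟨a, ha, rfl⟩ := hB
    obtain ⟨a', ha', rfl⟩ := hB'
    have ha2 : a ∈ insert 0 s := by exact_mod_cast ha
    have ha2' : a' ∈ insert 0 s := by exact_mod_cast ha'
    have : a ≠ a' := fun h => hne (by rw [h])
    exact blk_disjoint hn hs ha2 ha2' this
  · apply Finset.Subset.antisymm
    · intro t ht
      rw [Finset.mem_sup] at ht
      obtain ⟨B, hB, htB⟩ := ht
      obtain ⟨a, ha, rfl⟩ := Finset.mem_image.mp hB
      exact blk_subset_range (mem_lt_n hn hs a ha) htB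
    · intro t ht
      rw [Finset.mem_range] at ht
      obtain ⟨a, ha, hta⟩ := blk_cover hn hs ht
      exact Finset.mem_sup.mpr ⟨blk n s a, Finset.mem_image_of_mem _ ha, hta⟩

lemma blocks_card (hn : 1 ≤ n) (hs : s ⊆ Finset.Icc 1 (n-1)) : (blocks n s).card = s.card + 1 := by
  rw [blocks, Finset.card_image_of_injOn, Finset.card_insert_of_notMem]
  · intro h0
    have := hs h0
    rw [Finset.mem_Icc] at this
    omega
  · intro a ha a' ha' h
    exact blk_inj (mem_lt_n hn hs a ha) (mem_lt_n hn hs a' ha') h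

lemma precedes_blk_iff (hn : 1 ≤ n) (hs : s ⊆ Finset.Icc 1 (n-1)) {a a' : ℕ} (ha : a ∈ insert 0 s) (ha' : a' ∈ insert 0 s) :
    Precedes (blk n s a) (blk n s a') ↔ a' = nxt n s a := by
  have han : a < n := mem_lt_n hn hs a ha
  have ha'n : a' < n := mem_lt_n hn hs a' ha'
  have hg := nxt_gt (s := s) han
  have hg' := nxt_gt (s := s) ha'n
  constructor
  · rintro ⟨t, ht, hmax, ht1, hmin⟩
    rw [mem_blk han] at ht
    rw [mem_blk ha'n] at ht1
    have hend : nxt n s a - 1 ∈ blk n s a := (mem_blk han).mpr ⟨by omega, by omega⟩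
    have h1 := hmax _ hend
    have h2 := hmin a' (mem_blk_self ha'n)
    omega
  · intro h
    refine ⟨nxt n s a - 1, (mem_blk han).mpr ⟨by omega, by omega⟩, ?_, ?_, ?_⟩
    · intro u hu; rw [mem_blk han] at hu; omega
    · rw [mem_blk ha'n]; omega
    · intro u hu; rw [mem_blk ha'n] at hu; omega

lemma nxt_eq_iff (hn : 1 ≤ n) (hs : s ⊆ Finset.Icc 1 (n-1)) {a a' : ℕ} (ha : a ∈ insert 0 s) (ha' : a' ∈ insert 0 s)
    (hlt : a < a') : a' = nxt n s a ↔ ¬ ∃ c ∈ insert 0 s, a < c ∧ c < a' := by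
  have han : a < n := mem_lt_n hn hs a ha
  have ha'n : a' < n := mem_lt_n hn hs a' ha'
  have ha's : a' ∈ insert n s := by
    rcases Finset.mem_insert.mp ha' with rfl | h'
    · omega
    · exact Finset.mem_insert_of_mem h'
  have hle : nxt n s a ≤ a' := (nxt_def han).2.2 a' ha's hlt
  constructor
  · rintro rfl ⟨c, hc, hac, hca⟩
    have hcs : c ∈ insert n s := by
      rcases Finset.mem_insert.mp hc with rfl | h'
      · omega
      · exact Finset.mem_insert_of_mem h'
    exact nxt_no_mid han hcs hac hca
  · intro h
    by_contra hne
    have hlt2 : nxt n s a < a' := by omega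
    have h1 := (nxt_def (s := s) han).2.1
    have h2 := nxt_gt (s := s) han
    have : nxt n s a ∈ s := by
      rcases Finset.mem_insert.mp h1 with h' | h'
      · omega
      · exact h'
    exact h ⟨nxt n s a, Finset.mem_insert_of_mem this, h2, hlt2⟩

lemma adj_blk_iff (hn : 1 ≤ n) (hs : s ⊆ Finset.Icc 1 (n-1)) {a a' : ℕ} (ha : a ∈ insert 0 s) (ha' : a' ∈ insert 0 s)
    (hlt : a < a') :
    AdjBlocks (blk n s a) (blk n s a') ↔ ¬ ∃ c ∈ insert 0 s, a < c ∧ c < a' := by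
  rw [AdjBlocks, precedes_blk_iff hn hs ha ha', precedes_blk_iff hn hs ha' ha,
    ← nxt_eq_iff hn hs ha ha' hlt]
  have ha'n : a' < n := mem_lt_n hn hs a' ha'
  have := nxt_gt (s := s) ha'n
  constructor
  · rintro (h | h)
    · exact h
    · omega
  · exact Or.inl

end withsub

noncomputable def startOf (B : Finset ℕ) : ℕ := if h : B.Nonempty then B.min' h else 0

noncomputable def sOf (M : Finset (Finset ℕ)) : Finset ℕ := (M.image startOf).erase 0

lemma startOf_Icc {a b : ℕ} (h : a ≤ b) : startOf (Finset.Icc a b) = a := by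
  have hne : (Finset.Icc a b).Nonempty := ⟨a, Finset.mem_Icc.mpr ⟨le_refl a, h⟩⟩
  rw [startOf, dif_pos hne]
  apply le_antisymm
  · exact Finset.min'_le _ a (Finset.mem_Icc.mpr ⟨le_refl a, h⟩)
  · exact Finset.le_min' _ _ _ (fun x hx => (Finset.mem_Icc.mp hx).1)

lemma startOf_blk {n a : ℕ} {s : Finset ℕ} (ha : a < n) : startOf (blk n s a) = a := by
  rw [blk]
  exact startOf_Icc (by have := nxt_gt (s := s) ha; omega)

section config
variable {n : ℕ} {M : Finset (Finset ℕ)}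

lemma config_shape (hM : IsBlockConfig n M) {B} (hB : B ∈ M) :
    ∃ b, startOf B ≤ b ∧ b < n ∧ B = Finset.Icc (startOf B) b := by
  obtain ⟨⟨a, b, hab, rfl⟩, hsub⟩ := hM.1 B hB
  rw [startOf_Icc hab]
  refine ⟨b, hab, ?_, rfl⟩
  have := hsub (Finset.mem_Icc.mpr ⟨hab, le_refl b⟩)
  rwa [Finset.mem_range] at this

lemma config_unique (hM : IsBlockConfig n M) {B B' : Finset ℕ} {t : ℕ} (hB : B ∈ M)
    (hB' : B' ∈ M) (ht : t ∈ B) (ht' : t ∈ B') : B = B' := by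
  by_contra hne
  have hd := hM.2.1 (Finset.mem_coe.mpr hB) (Finset.mem_coe.mpr hB') hne
  exact Finset.disjoint_left.mp hd ht ht'

lemma config_cover (hM : IsBlockConfig n M) {t : ℕ} (ht : t < n) : ∃ B ∈ M, t ∈ B := by
  have h : t ∈ M.sup id := by rw [hM.2.2]; exact Finset.mem_range.mpr ht
  obtain ⟨B, hB, htB⟩ := Finset.mem_sup.mp h
  exact ⟨B, hB, htB⟩

lemma config_insert_sOf (hn : 1 ≤ n) (hM : IsBlockConfig n M) :
    insert 0 (sOf M) = M.image startOf := by
  rw [sOf, Finset.insert_erase]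
  obtain ⟨B, hB, h0B⟩ := config_cover hM (show 0 < n by omega)
  obtain ⟨b, hab, hbn, hBeq⟩ := config_shape hM hB
  have h0 : startOf B = 0 := by
    rw [hBeq, Finset.mem_Icc] at h0B
    omega
  rw [← h0]
  exact Finset.mem_image_of_mem _ hB

lemma sOf_subset (hM : IsBlockConfig n M) : sOf M ⊆ Finset.Icc 1 (n-1) := by
  intro x hx
  rw [sOf, Finset.mem_erase] at hx
  obtain ⟨hx0, hxim⟩ := hx
  obtain ⟨B, hB, rfl⟩ := Finset.mem_image.mp hxim
  obtain ⟨b, hab, hbn, hBeq⟩ := config_shape hM hB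
  rw [Finset.mem_Icc]
  omega

lemma config_blk (hn : 1 ≤ n) (hM : IsBlockConfig n M) {B} (hB : B ∈ M) :
    B = blk n (sOf M) (startOf B) := by
  obtain ⟨b, hab, hbn, hBeq⟩ := config_shape hM hB
  set a := startOf B with haeq
  have hi : ∀ c ∈ insert n (sOf M), a < c → b < c := by
    intro c hc hac
    by_contra hbc
    push_neg at hbc
    have hcn : c ≠ n := by omega
    have hcs : c ∈ sOf M := by
      rcases Finset.mem_insert.mp hc with rfl | h
      · omega
      · exact h
    have hcim : c ∈ M.image startOf := (Finset.mem_erase.mp hcs).2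
    obtain ⟨B', hB', hceq⟩ := Finset.mem_image.mp hcim
    obtain ⟨b', hab', hbn', hBeq'⟩ := config_shape hM hB'
    have hcB : c ∈ B := by rw [hBeq, Finset.mem_Icc]; omega
    have hcB' : c ∈ B' := by rw [hBeq', Finset.mem_Icc]; omega
    have hBB' : B = B' := config_unique hM hB hB' hcB hcB'
    rw [hBB'] at haeq
    omega
  have hii : b + 1 ∈ insert n (sOf M) := by
    rcases Nat.eq_or_lt_of_le (show b+1 ≤ n by omega) with h | h
    · rw [h]
      exact Finset.mem_insert_self n _
    · obtain ⟨B', hB', hmem⟩ := config_cover hM h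
      obtain ⟨b', hab', hbn', hBeq'⟩ := config_shape hM hB'
      have hmem2 : startOf B' ≤ b + 1 ∧ b + 1 ≤ b' := by
        rw [hBeq', Finset.mem_Icc] at hmem
        exact hmem
      have hstart : startOf B' = b + 1 := by
        by_contra hne2
        have hlt : startOf B' ≤ b := by omega
        have hbB' : b ∈ B' := by rw [hBeq', Finset.mem_Icc]; omega
        have hbB : b ∈ B := by rw [hBeq, Finset.mem_Icc]; omega
        have hBB' : B = B' := config_unique hM hB hB' hbB hbB'
        rw [← hBB'] at hmem
        rw [hBeq, Finset.mem_Icc] at hmem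
        omega
      refine Finset.mem_insert_of_mem ?_
      rw [sOf, Finset.mem_erase]
      exact ⟨by omega, hstart ▸ Finset.mem_image_of_mem _ hB'⟩
  have han : a < n := by omega
  have hspec := nxt_def (s := sOf M) han
  have h1 : nxt n (sOf M) a ≤ b + 1 := hspec.2.2 _ hii (by omega)
  have h2 : b < nxt n (sOf M) a := hi _ hspec.2.1 hspec.1
  have heq : nxt n (sOf M) a = b + 1 := by omega
  rw [blk, heq, hBeq]
  norm_num

lemma blocks_sOf (hn : 1 ≤ n) (hM : IsBlockConfig n M) : blocks n (sOf M) = M := by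
  apply Finset.Subset.antisymm
  · intro B hB
    obtain ⟨a, ha, rfl⟩ := Finset.mem_image.mp hB
    rw [config_insert_sOf hn hM] at ha
    obtain ⟨B', hB', rfl⟩ := Finset.mem_image.mp ha
    rw [← config_blk hn hM hB']
    exact hB'
  · intro B hB
    rw [config_blk hn hM hB]
    apply Finset.mem_image_of_mem
    rw [config_insert_sOf hn hM]
    exact Finset.mem_image_of_mem _ hB

end config

lemma blocks_inj {n : ℕ} {s s' : Finset ℕ} (hn : 1 ≤ n) (hs : s ⊆ Finset.Icc 1 (n-1))
    (hs' : s' ⊆ Finset.Icc 1 (n-1)) (h : blocks n s = blocks n s') : s = s' := by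
  have key : ∀ (u u' : Finset ℕ), u ⊆ Finset.Icc 1 (n-1) → u' ⊆ Finset.Icc 1 (n-1) →
      blocks n u = blocks n u' → ∀ a ∈ u, a ∈ u' := by
    intro u u' hu hu' huu a ha
    have ha1 : a ∈ insert 0 u := Finset.mem_insert_of_mem ha
    have hblk : blk n u a ∈ blocks n u' := by
      rw [← huu]
      exact Finset.mem_image_of_mem _ ha1
    obtain ⟨a', ha', heq⟩ := Finset.mem_image.mp hblk
    have han : a < n := mem_lt_n hn hu a ha1
    have ha'n : a' < n := mem_lt_n hn hu' a' ha'
    have : a' = a := blk_inj ha'n han heq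
    subst this
    rcases Finset.mem_insert.mp ha' with h0 | h1
    · have := hu ha
      rw [Finset.mem_Icc] at this
      omega
    · exact h1
  exact Finset.Subset.antisymm (fun a ha => key s s' hs hs' h a ha)
    (fun a ha => key s' s hs' hs h.symm a ha)



noncomputable def Pset (n lmax : ℕ) : Finset (Finset ℕ) :=
  (Finset.Icc 1 (n-1)).powerset.filter (fun s => s.card ≤ lmax)

noncomputable def innerSet (s : Finset ℕ) : Finset (Finset ℕ) :=
  (insert 0 s).powerset.filter
    (fun r => ∀ a ∈ r, ∀ b ∈ r, a < b → ∃ c ∈ insert 0 s, a < c ∧ c < b)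

noncomputable def Tset (n lmax : ℕ) : Finset ((_ : Finset ℕ) × Finset ℕ) :=
  (Pset n lmax).sigma (fun s => innerSet s)

lemma mem_Pset {n lmax : ℕ} {s : Finset ℕ} :
    s ∈ Pset n lmax ↔ s ⊆ Finset.Icc 1 (n-1) ∧ s.card ≤ lmax := by
  simp only [Pset, Finset.mem_filter, Finset.mem_powerset]

lemma mem_innerSet {s r : Finset ℕ} :
    r ∈ innerSet s ↔ r ⊆ insert 0 s ∧
      ∀ a ∈ r, ∀ b ∈ r, a < b → ∃ c ∈ insert 0 s, a < c ∧ c < b := by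
  simp only [innerSet, Finset.mem_filter, Finset.mem_powerset]

lemma innerSet_card (s : Finset ℕ) (h0 : 0 ∉ s) :
    (innerSet s).card = Nat.fib (s.card + 3) := by
  have hfe : ∀ (D1 D2 : DecidablePred (fun r : Finset ℕ =>
      ∀ a ∈ r, ∀ b ∈ r, a < b → ∃ c ∈ insert 0 s, a < c ∧ c < b)),
      @Finset.filter _ _ D1 (insert 0 s).powerset
        = @Finset.filter _ _ D2 (insert 0 s).powerset := by
    intro D1 D2
    ext x
    rw [@Finset.mem_filter _ _ D1, @Finset.mem_filter _ _ D2]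
  rw [innerSet]
  have hc : s.card + 3 = (insert 0 s).card + 2 := by
    rw [Finset.card_insert_of_notMem h0]
  rw [hc]
  exact (congrArg Finset.card (hfe _ _)).trans (indep_count' (insert 0 s))

set_option maxHeartbeats 1000000 in
lemma pairs_count (n lmax : ℕ) (hn : 1 ≤ n) :
    ((((Finset.range n).powerset.powerset ×ˢ (Finset.range n).powerset.powerset)).filter
      (fun q : Finset (Finset ℕ) × Finset (Finset ℕ) =>
        IsBlockConfig n q.1 ∧ q.1.card ≤ lmax + 1 ∧ q.2 ⊆ q.1 ∧
          ∀ B ∈ q.2, ∀ B' ∈ q.2, ¬ AdjBlocks B B')).card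
    = ∑ l ∈ Finset.range (lmax + 1), (n - 1).choose l * Nat.fib (l + 3) := by
  have hcard : (Tset n lmax).card = ((((Finset.range n).powerset.powerset ×ˢ
      (Finset.range n).powerset.powerset)).filter
      (fun q : Finset (Finset ℕ) × Finset (Finset ℕ) =>
        IsBlockConfig n q.1 ∧ q.1.card ≤ lmax + 1 ∧ q.2 ⊆ q.1 ∧
          ∀ B ∈ q.2, ∀ B' ∈ q.2, ¬ AdjBlocks B B')).card := by
    apply Finset.card_bij (fun x _ => (blocks n x.1, x.2.image (blk n x.1)))
    · -- maps into target
      rintro ⟨s, r⟩ hx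
      dsimp only
      rw [Tset, Finset.mem_sigma] at hx
      dsimp only at hx
      obtain ⟨hsP, hr⟩ := hx
      obtain ⟨hs, hslm⟩ := mem_Pset.mp hsP
      obtain ⟨hrsub, hindep⟩ := mem_innerSet.mp hr
      have hRM : r.image (blk n s) ⊆ blocks n s := Finset.image_subset_image hrsub
      simp only [Finset.mem_filter, Finset.mem_product, Finset.mem_powerset]
      refine ⟨⟨?_, ?_⟩, blocks_isConfig hn hs, ?_, hRM, ?_⟩
      · intro B hB
        obtain ⟨a, ha, rfl⟩ := Finset.mem_image.mp hB
        rw [Finset.mem_powerset]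
        exact blk_subset_range (mem_lt_n hn hs a ha)
      · intro B hB
        obtain ⟨a, ha, rfl⟩ := Finset.mem_image.mp (hRM hB)
        rw [Finset.mem_powerset]
        exact blk_subset_range (mem_lt_n hn hs a ha)
      · rw [blocks_card hn hs]; omega
      · intro B hB B' hB'
        obtain ⟨a, ha, rfl⟩ := Finset.mem_image.mp hB
        obtain ⟨a', ha', rfl⟩ := Finset.mem_image.mp hB'
        have ha1 : a ∈ insert 0 s := hrsub ha
        have ha1' : a' ∈ insert 0 s := hrsub ha'
        rcases lt_trichotomy a a' with h | h | h
        · rw [adj_blk_iff hn hs ha1 ha1' h]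
          intro hcon
          exact hcon (hindep a ha a' ha' h)
        · subst h
          rintro (hpre | hpre) <;>
          · rw [precedes_blk_iff hn hs ha1 ha1] at hpre
            have := nxt_gt (s := s) (mem_lt_n hn hs a ha1)
            omega
        · intro hadj
          have hadj' : AdjBlocks (blk n s a') (blk n s a) := hadj.symm
          rw [adj_blk_iff hn hs ha1' ha1 h] at hadj'
          exact hadj' (hindep a' ha' a ha h)
    · -- injective
      rintro ⟨s, r⟩ hx ⟨s', r'⟩ hy heq
      dsimp only at heq
      rw [Tset, Finset.mem_sigma] at hx hy
      dsimp only at hx hy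
      obtain ⟨hsP, hr⟩ := hx
      obtain ⟨hsP', hr'⟩ := hy
      obtain ⟨hs, _⟩ := mem_Pset.mp hsP
      obtain ⟨hs', _⟩ := mem_Pset.mp hsP'
      obtain ⟨hrsub, _⟩ := mem_innerSet.mp hr
      obtain ⟨hrsub', _⟩ := mem_innerSet.mp hr'
      rw [Prod.mk.injEq] at heq
      obtain ⟨h1, h2⟩ := heq
      have hss : s = s' := blocks_inj hn hs hs' h1
      subst hss
      have hrr : r = r' := by
        apply Finset.Subset.antisymm
        · intro a ha
          have hmem : blk n s a ∈ r'.image (blk n s) := by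
            rw [← h2]
            exact Finset.mem_image_of_mem _ ha
          obtain ⟨a', ha', heq'⟩ := Finset.mem_image.mp hmem
          have := blk_inj (mem_lt_n hn hs a' (hrsub' ha'))
            (mem_lt_n hn hs a (hrsub ha)) heq'
          rwa [← this]
        · intro a ha
          have hmem : blk n s a ∈ r.image (blk n s) := by
            rw [h2]
            exact Finset.mem_image_of_mem _ ha
          obtain ⟨a', ha', heq'⟩ := Finset.mem_image.mp hmem
          have := blk_inj (mem_lt_n hn hs a' (hrsub ha'))
            (mem_lt_n hn hs a (hrsub' ha)) heq'
          rwa [← this]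
      rw [hrr]
    · -- surjective
      rintro ⟨M, R⟩ hq
      simp only [Finset.mem_filter, Finset.mem_product, Finset.mem_powerset] at hq
      obtain ⟨⟨hMsub, hRsub⟩, hM, hMcard, hRM, hnoadj⟩ := hq
      have hs : sOf M ⊆ Finset.Icc 1 (n-1) := sOf_subset hM
      have hMeq : blocks n (sOf M) = M := blocks_sOf hn hM
      have hins : insert 0 (sOf M) = M.image startOf := config_insert_sOf hn hM
      have hrsub : R.image startOf ⊆ insert 0 (sOf M) := by
        rw [hins]
        exact Finset.image_subset_image hRM
      have hRblk : ∀ B ∈ R, B = blk n (sOf M) (startOf B) := fun B hB =>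
        config_blk hn hM (hRM hB)
      have hRimg : (R.image startOf).image (blk n (sOf M)) = R := by
        apply Finset.Subset.antisymm
        · intro B hB
          obtain ⟨a, ha, rfl⟩ := Finset.mem_image.mp hB
          obtain ⟨B', hB', rfl⟩ := Finset.mem_image.mp ha
          rw [← hRblk B' hB']
          exact hB'
        · intro B hB
          rw [hRblk B hB]
          exact Finset.mem_image_of_mem _ (Finset.mem_image_of_mem _ hB)
      have hscard : (sOf M).card ≤ lmax := by
        have := blocks_card hn hs
        rw [hMeq] at this
        omega
      refine ⟨⟨sOf M, R.image startOf⟩, ?_, ?_⟩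
      · rw [Tset, Finset.mem_sigma]
        refine ⟨mem_Pset.mpr ⟨hs, hscard⟩, mem_innerSet.mpr ⟨hrsub, ?_⟩⟩
        intro a ha b hb hab
        obtain ⟨Ba, hBa, rfl⟩ := Finset.mem_image.mp ha
        obtain ⟨Bb, hBb, rfl⟩ := Finset.mem_image.mp hb
        have h1 : Ba = blk n (sOf M) (startOf Ba) := hRblk Ba hBa
        have h2 : Bb = blk n (sOf M) (startOf Bb) := hRblk Bb hBb
        have hnadj := hnoadj Ba hBa Bb hBb
        rw [h1, h2] at hnadj
        rw [adj_blk_iff hn hs (hrsub ha) (hrsub hb) hab] at hnadj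
        exact not_not.mp hnadj
      · rw [Prod.mk.injEq]
        exact ⟨hMeq, hRimg⟩
  rw [← hcard, Tset, Finset.card_sigma]
  have hinner : ∀ s ∈ Pset n lmax, (innerSet s).card = Nat.fib (s.card + 3) := by
    intro s hsP
    obtain ⟨hs, _⟩ := mem_Pset.mp hsP
    refine innerSet_card s (fun h => ?_)
    have := hs h
    rw [Finset.mem_Icc] at this
    omega
  rw [Finset.sum_congr rfl hinner]
  have hPsplit : Pset n lmax = (Finset.range (lmax+1)).biUnion
      (fun l => Finset.powersetCard l (Finset.Icc 1 (n-1))) := by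
    ext s
    rw [mem_Pset, Finset.mem_biUnion]
    constructor
    · rintro ⟨h1, h2⟩
      exact ⟨s.card, Finset.mem_range.mpr (by omega),
        Finset.mem_powersetCard.mpr ⟨h1, rfl⟩⟩
    · rintro ⟨l, hl, hmem⟩
      rw [Finset.mem_powersetCard] at hmem
      rw [Finset.mem_range] at hl
      exact ⟨hmem.1, by omega⟩
  have hdisj : Set.PairwiseDisjoint ↑(Finset.range (lmax+1))
      (fun l => Finset.powersetCard l (Finset.Icc 1 (n-1))) := by
    intro l1 hl1 l2 hl2 hne
    simp only [Function.onFun]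
    rw [Finset.disjoint_left]
    intro s hs1 hs2
    rw [Finset.mem_powersetCard] at hs1 hs2
    exact hne (hs1.2 ▸ hs2.2 ▸ rfl)
  rw [hPsplit, Finset.sum_biUnion hdisj]
  apply Finset.sum_congr rfl
  intro l hl
  have hcst : ∀ s ∈ Finset.powersetCard l (Finset.Icc 1 (n-1)),
      Nat.fib (s.card + 3) = Nat.fib (l + 3) := by
    intro s hsm
    rw [(Finset.mem_powersetCard.mp hsm).2]
  rw [Finset.sum_congr rfl hcst, Finset.sum_const, Finset.card_powersetCard,
    Nat.card_Icc, smul_eq_mul, show n - 1 + 1 - 1 = n - 1 by omega]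

/-- The number of triples `(d, M, R)` with `0 ≤ d ≤ d_max`, `M` a block configuration
of `{0,…,n−1}` with at most `l_max + 1` blocks, and `R ⊆ M` with no two blocks of `R`
adjacent, equals `(d_max + 1) · Σ_{l=0}^{l_max} C(n−1, l) · F (l+3)`. -/
theorem number_of_evaluations (n dmax lmax : ℕ) (hn : 1 ≤ n) (hl : lmax ≤ n - 1) :
    ((Finset.range (dmax + 1) ×ˢ
        ((Finset.range n).powerset.powerset ×ˢ (Finset.range n).powerset.powerset)).filter
      (fun p => IsBlockConfig n p.2.1 ∧ p.2.1.card ≤ lmax + 1 ∧ p.2.2 ⊆ p.2.1 ∧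
        ∀ B ∈ p.2.2, ∀ B' ∈ p.2.2, ¬ AdjBlocks B B')).card
      = (dmax + 1) * ∑ l ∈ Finset.range (lmax + 1), (n - 1).choose l * Nat.fib (l + 3) := by
  have hfac : (Finset.range (dmax + 1) ×ˢ
        ((Finset.range n).powerset.powerset ×ˢ (Finset.range n).powerset.powerset)).filter
      (fun p => IsBlockConfig n p.2.1 ∧ p.2.1.card ≤ lmax + 1 ∧ p.2.2 ⊆ p.2.1 ∧
        ∀ B ∈ p.2.2, ∀ B' ∈ p.2.2, ¬ AdjBlocks B B')
      = Finset.range (dmax + 1) ×ˢ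
        ((((Finset.range n).powerset.powerset ×ˢ (Finset.range n).powerset.powerset)).filter
          (fun q : Finset (Finset ℕ) × Finset (Finset ℕ) =>
            IsBlockConfig n q.1 ∧ q.1.card ≤ lmax + 1 ∧ q.2 ⊆ q.1 ∧
              ∀ B ∈ q.2, ∀ B' ∈ q.2, ¬ AdjBlocks B B')) := by
    ext p
    simp only [Finset.mem_filter, Finset.mem_product]
    tauto
  rw [hfac, Finset.card_product, Finset.card_range, pairs_count n lmax hn]
end

section
/- Let n ≥ 1, let G be a finite type with a distinguished reference element g̃ and depth function δ : G → ℕ with δ(g̃) = 0, let u : G × T → ℝ be a loading function, and let A(t) ⊆ G with g̃ ∈ A(t) for every t ∈ T. Let s : T → G be a strategy (s(t) ∈ A(t) for all t), let M be the unique block configuration such that s is constant on every block of M and takes distinct values on adjacent blocks, let R = {B ∈ M : s takes the value g̃ on B}, and let d = max_{t∈T} δ(s(t)). Then: (i) no two blocks of R are adjacent; (ii) #{t ∈ {1,…,n−1} : s(t) ≠ s(t−1)} = |M| − 1 and #{t ∈ T : s(t) ≠ g̃} = n − Σ_{B∈R} |B|; and (iii) LF1(d, M, R) ≤ max_{t∈T}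 u(s(t), t). -/
open scoped Classical

/-- `LF₁(B, d)`: the best achievable worst-case loading on block `B` using a
topology available throughout `B` (i.e. in `A_B = ∩_{t∈B} A t`) of depth at most
`d`, computed in the extended reals (`+∞` if no such topology exists, and the inner
maximum over an empty block is `−∞`). -/
noncomputable def blockLF {G : Type*} [Fintype G] (u : G → ℕ → ℝ) (A : ℕ → Finset G)
    (δ : G → ℕ) (d : ℕ) (B : Finset ℕ) : EReal :=
  (Finset.univ.filter (fun g : G => (∀ t ∈ B, g ∈ A t) ∧ δ g ≤ d)).inf
    (fun g => B.sup (fun t => ((u g t : ℝ) : EReal)))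

/-- Worst-case loading of the reference topology `gref` over block `B`. -/
noncomputable def refLF {G : Type*} (u : G → ℕ → ℝ) (gref : G) (B : Finset ℕ) : EReal :=
  B.sup (fun t => ((u gref t : ℝ) : EReal))

/-- `LF₁(d, M, R)`: the best achievable worst-case loading for block configuration
`M` with reference-block assignment `R ⊆ M`, depth bound `d`, computed in the
extended reals (minimum over an empty set is `+∞`, maximum over an empty collection
is `−∞`). -/
noncomputable def LF1 {G : Type*} [Fintype G] (u : G → ℕ → ℝ) (A : ℕ → Finset G)
    (δ : G → ℕ) (gref : G) (d : ℕ) (M R : Finset (Finset ℕ)) : EReal :=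
  max ((M \ R).sup (blockLF u A δ d)) (R.sup (refLF u gref))

/-- For a strategy `s` with associated block configuration `M` (on whose blocks `s`
is constant, with distinct values on adjacent blocks), reference assignment
`R = {B ∈ M : s ≡ g̃ on B}` and depth `d = max_{t∈T} δ(s t)`:
(i) no two blocks of `R` are adjacent;
(ii) the number of switching time steps equals `|M| − 1` and the number of time
steps outside the reference topology equals `n − Σ_{B∈R} |B|`;
(iii) `LF₁(d, M, R) ≤ max_{t∈T} u(s t, t)`. -/
theorem strategy_block_representation {G : Type*} [Fintype G] (n : ℕ) (hn : 1 ≤ n)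
    (gref : G) (δ : G → ℕ) (hδ : δ gref = 0) (u : G → ℕ → ℝ)
    (A : ℕ → Finset G) (hA : ∀ t ∈ Finset.range n, gref ∈ A t)
    (s : ℕ → G) (hs : ∀ t ∈ Finset.range n, s t ∈ A t)
    (M : Finset (Finset ℕ)) (hM : IsBlockConfig n M)
    (hconst : ∀ B ∈ M, ∀ t ∈ B, ∀ t' ∈ B, s t = s t')
    (hadj : ∀ B ∈ M, ∀ B' ∈ M, AdjBlocks B B' → ∀ t ∈ B, ∀ t' ∈ B', s t ≠ s t') :
    (∀ B ∈ M.filter (fun B => ∀ t ∈ B, s t = gref),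
      ∀ B' ∈ M.filter (fun B => ∀ t ∈ B, s t = gref), ¬ AdjBlocks B B') ∧
    ((Finset.Icc 1 (n - 1)).filter (fun t => s t ≠ s (t - 1))).card = M.card - 1 ∧
    ((Finset.range n).filter (fun t => s t ≠ gref)).card
      = n - ∑ B ∈ M.filter (fun B => ∀ t ∈ B, s t = gref), B.card ∧
    LF1 u A δ gref ((Finset.range n).sup (fun t => δ (s t))) M
        (M.filter (fun B => ∀ t ∈ B, s t = gref))
      ≤ (Finset.range n).sup (fun t => ((u (s t) t : ℝ) : EReal)) := by

  classical
  obtain ⟨hblocks, hdisj, hcover⟩ := hM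
  set R := M.filter (fun B => ∀ t ∈ B, s t = gref) with hR
  -- basic facts
  have hsub : ∀ B ∈ M, B ⊆ Finset.range n := fun B hB => (hblocks B hB).2
  have hBne : ∀ B ∈ M, B.Nonempty := by
    intro B hB
    obtain ⟨⟨a, b, hab, rfl⟩, -⟩ := hblocks B hB
    exact ⟨a, Finset.mem_Icc.mpr ⟨le_refl a, hab⟩⟩
  have hmem : ∀ t, t < n → ∃ B ∈ M, t ∈ B := by
    intro t ht
    have : t ∈ M.sup id := hcover ▸ Finset.mem_range.mpr ht
    simpa using Finset.mem_sup.mp this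
  have huniq : ∀ B ∈ M, ∀ B' ∈ M, ∀ t, t ∈ B → t ∈ B' → B = B' := by
    intro B hB B' hB' t htB htB'
    by_contra hne
    exact (Finset.disjoint_left.mp (hdisj hB hB' hne)) htB htB'
  -- if t ∈ B, t-1 ∉ B, 1 ≤ t then t is the minimum of B
  have hstart : ∀ B ∈ M, ∀ t, t ∈ B → 1 ≤ t → (t - 1) ∉ B → ∀ x ∈ B, t ≤ x := by
    intro B hB t htB ht1 hnot x hx
    obtain ⟨⟨a, b, hab, rfl⟩, -⟩ := hblocks B hB
    rw [Finset.mem_Icc] at htB hx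
    by_contra hlt
    exact hnot (Finset.mem_Icc.mpr ⟨by omega, by omega⟩)
  -- adjacency from consecutive membership in distinct blocks
  have hprec : ∀ B ∈ M, ∀ B' ∈ M, ∀ t, 1 ≤ t → (t - 1) ∈ B' → t ∈ B → B ≠ B' →
      Precedes B' B := by
    intro B hB B' hB' t ht1 ht'B' htB hne
    have hnotB : (t - 1) ∉ B := fun h =>
      hne (huniq B hB B' hB' (t - 1) h ht'B')
    have hnotB' : t ∉ B' := fun h => hne (huniq B hB B' hB' t htB h)
    refine ⟨t - 1, ht'B', ?_, by simpa [Nat.sub_add_cancel ht1] using htB, ?_⟩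
    · intro x hxB'
      obtain ⟨⟨a, b, hab, rfl⟩, -⟩ := hblocks B' hB'
      rw [Finset.mem_Icc] at hxB' ht'B'
      by_contra hgt
      exact hnotB' (Finset.mem_Icc.mpr ⟨by omega, by omega⟩)
    · intro x hxB
      have := hstart B hB t htB ht1 hnotB x hxB
      omega
  -- (i): no two reference blocks are adjacent
  have part1 : ∀ B ∈ R, ∀ B' ∈ R, ¬ AdjBlocks B B' := by
    intro B hB B' hB' hadjBB'
    rw [hR, Finset.mem_filter] at hB hB'
    obtain ⟨t, ht⟩ := hBne B hB.1
    obtain ⟨t', ht'⟩ := hBne B' hB'.1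
    exact hadj B hB.1 B' hB'.1 hadjBB' t ht t' ht' (by rw [hB.2 t ht, hB'.2 t' ht'])
  -- (ii) first count
  have part2 : ((Finset.Icc 1 (n - 1)).filter (fun t => s t ≠ s (t - 1))).card
      = M.card - 1 := by
    -- bijection between blocks not containing 0 and switch times
    have hbij : (M.filter (fun B => 0 ∉ B)).card
        = ((Finset.Icc 1 (n - 1)).filter (fun t => s t ≠ s (t - 1))).card := by
      refine Finset.card_bij (fun B hB => B.min' (hBne B (Finset.mem_filter.mp hB).1))
        ?_ ?_ ?_
      · intro B hB
        obtain ⟨hBM, h0B⟩ := Finset.mem_filter.mp hB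
        set a := B.min' (hBne B hBM) with ha
        have haB : a ∈ B := B.min'_mem _
        have han : a < n := Finset.mem_range.mp (hsub B hBM haB)
        have ha1 : 1 ≤ a := by
          rcases Nat.eq_zero_or_pos a with h | h
          · exact absurd (h ▸ haB) h0B
          · exact h
        obtain ⟨B', hB'M, hB'⟩ := hmem (a - 1) (by omega)
        have hBne' : B ≠ B' := by
          intro h
          have := B.min'_le (a - 1) (h ▸ hB')
          omega
        have hp : Precedes B' B := hprec B hBM B' hB'M a ha1 hB' haB hBne'
        refine Finset.mem_filter.mpr ⟨Finset.mem_Icc.mpr ⟨ha1, by omega⟩, ?_⟩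
        exact hadj B hBM B' hB'M (Or.inr hp) a haB (a - 1) hB'
      · intro B hB B' hB' heq
        exact huniq B (Finset.mem_filter.mp hB).1 B' (Finset.mem_filter.mp hB').1
          _ (heq ▸ B.min'_mem _) (B'.min'_mem _)
      · intro t ht
        obtain ⟨ht1, htn⟩ := Finset.mem_filter.mp ht
        rw [Finset.mem_Icc] at ht1
        have htlt : t < n := by omega
        obtain ⟨B, hBM, htB⟩ := hmem t htlt
        obtain ⟨B', hB'M, ht'B'⟩ := hmem (t - 1) (by omega)
        have hBB' : B ≠ B' := by
          intro h
          exact htn (hconst B hBM t htB (t - 1) (h ▸ ht'B'))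
        have hnotB : (t - 1) ∉ B := fun h => hBB' (huniq B hBM B' hB'M (t - 1) h ht'B')
        have hmin : ∀ x ∈ B, t ≤ x := hstart B hBM t htB ht1.1 hnotB
        have h0B : 0 ∉ B := fun h => by have := hmin 0 h; omega
        refine ⟨B, Finset.mem_filter.mpr ⟨hBM, h0B⟩, ?_⟩
        exact le_antisymm (B.min'_le t htB) (hmin _ (B.min'_mem _))
    -- the block containing 0
    obtain ⟨B₀, hB₀M, h0B₀⟩ := hmem 0 (by omega)
    have hfilter0 : M.filter (fun B => 0 ∈ B) = {B₀} := by
      ext B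
      simp only [Finset.mem_filter, Finset.mem_singleton]
      constructor
      · rintro ⟨hBM, h0B⟩
        exact huniq B hBM B₀ hB₀M 0 h0B h0B₀
      · rintro rfl
        exact ⟨hB₀M, h0B₀⟩
    have hsplit := Finset.card_filter_add_card_filter_not
      (s := M) (p := fun B => 0 ∈ B)
    rw [hfilter0] at hsplit
    simp only [Finset.card_singleton] at hsplit
    rw [← hbij]
    omega
  -- (ii) second count
  have part3 : ((Finset.range n).filter (fun t => s t ≠ gref)).card
      = n - ∑ B ∈ R, B.card := by
    have hset : (Finset.range n).filter (fun t => s t = gref) = R.biUnion id := by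
      ext t
      simp only [Finset.mem_filter, Finset.mem_biUnion, Finset.mem_range, id_eq, hR,
        Finset.mem_filter]
      constructor
      · rintro ⟨htn, hst⟩
        obtain ⟨B, hBM, htB⟩ := hmem t htn
        exact ⟨B, ⟨hBM, fun t' ht' => (hconst B hBM t' ht' t htB).trans hst⟩, htB⟩
      · rintro ⟨B, ⟨hBM, hall⟩, htB⟩
        exact ⟨Finset.mem_range.mp (hsub B hBM htB), hall t htB⟩
    have hcard : ((Finset.range n).filter (fun t => s t = gref)).card = ∑ B ∈ R, B.card := by
      rw [hset]
      exact Finset.card_biUnion (fun B hB B' hB' hne =>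
        hdisj (Finset.mem_filter.mp hB).1 (Finset.mem_filter.mp hB').1 hne)
    have hsplit := Finset.card_filter_add_card_filter_not
      (s := Finset.range n) (p := fun t => s t = gref)
    rw [hcard, Finset.card_range] at hsplit
    have hle : ∑ B ∈ R, B.card ≤ n := by omega
    simp only [ne_eq]
    omega
  -- (iii)
  have part4 : LF1 u A δ gref ((Finset.range n).sup (fun t => δ (s t))) M R
      ≤ (Finset.range n).sup (fun t => ((u (s t) t : ℝ) : EReal)) := by
    rw [LF1]
    refine max_le ?_ ?_
    · refine Finset.sup_le ?_
      intro B hB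
      have hBM : B ∈ M := (Finset.mem_sdiff.mp hB).1
      obtain ⟨t₀, ht₀⟩ := hBne B hBM
      have ht₀n : t₀ ∈ Finset.range n := hsub B hBM ht₀
      have hgmem : s t₀ ∈ Finset.univ.filter
          (fun g : G => (∀ t ∈ B, g ∈ A t) ∧
            δ g ≤ (Finset.range n).sup (fun t => δ (s t))) := by
        refine Finset.mem_filter.mpr ⟨Finset.mem_univ _, ?_, ?_⟩
        · intro t htB
          rw [hconst B hBM t₀ ht₀ t htB]
          exact hs t (hsub B hBM htB)
        · exact Finset.le_sup (f := fun t => δ (s t)) ht₀n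
      refine le_trans (Finset.inf_le hgmem) ?_
      refine Finset.sup_le ?_
      intro t htB
      rw [hconst B hBM t₀ ht₀ t htB]
      exact Finset.le_sup (f := fun t => ((u (s t) t : ℝ) : EReal)) (hsub B hBM htB)
    · refine Finset.sup_le ?_
      intro B hB
      obtain ⟨hBM, hall⟩ := Finset.mem_filter.mp hB
      refine Finset.sup_le ?_
      intro t htB
      rw [← hall t htB]
      exact Finset.le_sup (f := fun t => ((u (s t) t : ℝ) : EReal)) (hsub B hBM htB)
  exact ⟨part1, part2, part3, part4⟩
end

section
/- Let n ≥ 1, let G be a finite type with a distinguished reference element g̃ and depth function δ : G → ℕ with δ(g̃) = 0, let u : G × T → ℝ be a loading function, and let A(t) ⊆ G with g̃ ∈ A(t) for every t ∈ T. Let M be a block configuration of T, let R ⊆ M be such that no two blocks of R are adjacent, and let d ∈ ℕ. Assume that for every block B ∈ M ∖ R there exists g ∈ A_B with δ(g) ≤ d. Then there exists a strategy s : T → G with s(t) ∈ A(t) for all t, such that max_{t∈T} δ(s(t)) ≤ d, #{t ∈ {1,…,n−1} : s(t) ≠ s(t−1)} ≤ |M| − 1, #{t ∈ T : s(t) ≠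 g̃} ≤ n − Σ_{B∈R} |B|, and max_{t∈T} u(s(t), t) = LF1(d, M, R). -/
open scoped Classical

/-- Given a block configuration `M`, a non-adjacent reference assignment `R ⊆ M`,
and a depth bound `d` such that every non-reference block admits an available
topology of depth at most `d`, there exists a strategy `s` (with `s t ∈ A t` for
all `t`) of maximal depth at most `d`, at most `|M| − 1` switching time steps, at
most `n − Σ_{B∈R} |B|` time steps outside the reference topology, and whose
worst-case loading `max_{t∈T} u(s t, t)` equals `LF₁(d, M, R)`. -/
theorem exists_strategy_attaining_LF1 {G : Type*} [Fintype G] (n : ℕ) (hn : 1 ≤ n)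
    (gref : G) (δ : G → ℕ) (hδ : δ gref = 0) (u : G → ℕ → ℝ)
    (A : ℕ → Finset G) (hA : ∀ t ∈ Finset.range n, gref ∈ A t)
    (M : Finset (Finset ℕ)) (hM : IsBlockConfig n M)
    (R : Finset (Finset ℕ)) (hR : R ⊆ M)
    (hRadj : ∀ B ∈ R, ∀ B' ∈ R, ¬ AdjBlocks B B')
    (d : ℕ)
    (hfeas : ∀ B ∈ M \ R, ∃ g : G, (∀ t ∈ B, g ∈ A t) ∧ δ g ≤ d) :
    ∃ s : ℕ → G, (∀ t ∈ Finset.range n, s t ∈ A t) ∧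
      (Finset.range n).sup (fun t => δ (s t)) ≤ d ∧
      ((Finset.Icc 1 (n - 1)).filter (fun t => s t ≠ s (t - 1))).card ≤ M.card - 1 ∧
      ((Finset.range n).filter (fun t => s t ≠ gref)).card ≤ n - ∑ B ∈ R, B.card ∧
      (Finset.range n).sup (fun t => ((u (s t) t : ℝ) : EReal))
        = LF1 u A δ gref d M R := by

  classical
  obtain ⟨hblocks, hdisj, hcover⟩ := hM
  have hcov : ∀ t ∈ Finset.range n, ∃ B ∈ M, t ∈ B := by
    intro t ht
    rw [← hcover] at ht
    simpa [Finset.mem_sup] using ht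
  set blk : ℕ → Finset ℕ := fun t => if h : ∃ B ∈ M, t ∈ B then h.choose else ∅ with hblk
  have hblkmem : ∀ t ∈ Finset.range n, blk t ∈ M ∧ t ∈ blk t := by
    intro t ht
    have h := hcov t ht
    simp only [hblk, dif_pos h]
    exact ⟨h.choose_spec.1, h.choose_spec.2⟩
  have huniq : ∀ B ∈ M, ∀ t ∈ B, blk t = B := by
    intro B hB t ht
    have htr : t ∈ Finset.range n := (hblocks B hB).2 ht
    obtain ⟨h1, h2⟩ := hblkmem t htr
    by_contra hne
    exact (Finset.disjoint_left.mp (hdisj (by simpa using h1) (by simpa using hB) hne) h2) ht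
  haveI : Inhabited G := ⟨gref⟩
  have hpick : ∀ B ∈ M \ R, ∃ g, ((∀ t ∈ B, g ∈ A t) ∧ δ g ≤ d) ∧
      (Finset.univ.filter (fun g : G => (∀ t ∈ B, g ∈ A t) ∧ δ g ≤ d)).inf
        (fun g => B.sup (fun t => ((u g t : ℝ) : EReal)))
        = B.sup (fun t => ((u g t : ℝ) : EReal)) := by
    intro B hB
    obtain ⟨g0, hg0⟩ := hfeas B hB
    have hne : (Finset.univ.filter (fun g : G => (∀ t ∈ B, g ∈ A t) ∧ δ g ≤ d)).Nonempty :=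
      ⟨g0, by simp only [Finset.mem_filter]; exact ⟨Finset.mem_univ _, hg0⟩⟩
    obtain ⟨g, hgmem, hge⟩ := Finset.exists_mem_eq_inf _ hne
      (fun g => B.sup (fun t => ((u g t : ℝ) : EReal)))
    refine ⟨g, ?_, hge⟩
    simpa using hgmem
  choose! gpick hgmem hginf using hpick
  set gsel : Finset ℕ → G := fun B => if B ∈ M \ R then gpick B else gref with hgsel
  set s : ℕ → G := fun t => gsel (blk t) with hs
  have hsR : ∀ B ∈ R, ∀ t ∈ B, s t = gref := by
    intro B hB t ht
    have := huniq B (hR hB) t ht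
    simp only [hs, hgsel, this]
    rw [if_neg]
    simp [hB]
  have hsMR : ∀ B ∈ M \ R, ∀ t ∈ B, s t = gpick B := by
    intro B hB t ht
    have := huniq B (Finset.mem_sdiff.mp hB).1 t ht
    simp only [hs, hgsel, this]
    rw [if_pos hB]
  refine ⟨s, ?_, ?_, ?_, ?_, ?_⟩
  · -- availability
    intro t ht
    obtain ⟨hBM, htB⟩ := hblkmem t ht
    by_cases hBR : blk t ∈ R
    · rw [hsR _ hBR _ htB]
      exact hA t ht
    · have hB' : blk t ∈ M \ R := Finset.mem_sdiff.mpr ⟨hBM, hBR⟩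
      rw [hsMR _ hB' _ htB]
      exact (hgmem _ hB').1 t htB
  · -- depth
    apply Finset.sup_le
    intro t ht
    obtain ⟨hBM, htB⟩ := hblkmem t ht
    by_cases hBR : blk t ∈ R
    · rw [hsR _ hBR _ htB, hδ]
      exact Nat.zero_le d
    · have hB' : blk t ∈ M \ R := Finset.mem_sdiff.mpr ⟨hBM, hBR⟩
      rw [hsMR _ hB' _ htB]
      exact (hgmem _ hB').2
  · -- switching count
    have h0 : 0 ∈ Finset.range n := Finset.mem_range.mpr hn
    obtain ⟨hB0M, h0B0⟩ := hblkmem 0 h0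
    have key : ∀ t ∈ (Finset.Icc 1 (n-1)).filter (fun t => s t ≠ s (t-1)),
        blk t ∈ M.erase (blk 0) ∧ ∀ x ∈ blk t, t ≤ x := by
      intro t ht
      simp only [Finset.mem_filter, Finset.mem_Icc] at ht
      obtain ⟨⟨ht1, htn⟩, hne⟩ := ht
      have htr : t ∈ Finset.range n := Finset.mem_range.mpr (by omega)
      obtain ⟨hBM, htB⟩ := hblkmem t htr
      have h1n : t - 1 ∉ blk t := by
        intro h
        refine hne ?_
        show gsel (blk t) = gsel (blk (t - 1))
        rw [huniq (blk t) hBM (t - 1) h]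
      obtain ⟨⟨a, b, hab, hIcc⟩, _⟩ := hblocks _ hBM
      have haleb : a ≤ t ∧ t ≤ b := by simpa [hIcc, Finset.mem_Icc] using htB
      have hat : a = t := by
        by_contra h
        refine h1n ?_
        rw [hIcc, Finset.mem_Icc]
        omega
      constructor
      · refine Finset.mem_erase.mpr ⟨?_, hBM⟩
        intro h
        have h0' : (0:ℕ) ∈ blk t := h ▸ h0B0
        rw [hIcc, Finset.mem_Icc] at h0'
        omega
      · intro x hx
        rw [hIcc, Finset.mem_Icc] at hx
        omega
    have hinj : Set.InjOn blk ((Finset.Icc 1 (n-1)).filter (fun t => s t ≠ s (t-1))) := by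
      intro t ht t' ht' h
      have h1 := (key t ht).2
      have h2 := (key t' ht').2
      simp only [Finset.mem_coe, Finset.mem_filter, Finset.mem_Icc] at ht ht'
      have htr : t ∈ Finset.range n := Finset.mem_range.mpr (by omega)
      have htr' : t' ∈ Finset.range n := Finset.mem_range.mpr (by omega)
      have m1 := (hblkmem t htr).2
      have m2 := (hblkmem t' htr').2
      have le1 := h1 t' (h ▸ m2)
      have le2 := h2 t (h ▸ m1)
      omega
    calc ((Finset.Icc 1 (n-1)).filter (fun t => s t ≠ s (t-1))).card
        ≤ (M.erase (blk 0)).card :=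
          Finset.card_le_card_of_injOn blk (fun t ht => (key t ht).1) hinj
      _ = M.card - 1 := Finset.card_erase_of_mem hB0M
  · -- non-reference count
    have hsub : (Finset.range n).filter (fun t => s t ≠ gref) ⊆ Finset.range n \ R.sup id := by
      intro t ht
      simp only [Finset.mem_filter] at ht
      refine Finset.mem_sdiff.mpr ⟨ht.1, ?_⟩
      intro hmem
      rw [Finset.mem_sup] at hmem
      obtain ⟨B, hBR, htB⟩ := hmem
      exact ht.2 (hsR B hBR t htB)
    have hRsub : R.sup id ⊆ Finset.range n := hcover ▸ Finset.sup_mono hR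
    have hcard : (R.sup id).card = ∑ B ∈ R, B.card := by
      rw [Finset.sup_eq_biUnion]
      exact Finset.card_biUnion
        (fun B hB B' hB' h => hdisj (by simpa using hR hB) (by simpa using hR hB') h)
    calc ((Finset.range n).filter (fun t => s t ≠ gref)).card
        ≤ (Finset.range n \ R.sup id).card := Finset.card_le_card hsub
      _ = n - ∑ B ∈ R, B.card := by
          rw [Finset.card_sdiff_of_subset hRsub, Finset.card_range, hcard]
  · -- value
    have hrange : Finset.range n = M.biUnion id := by
      rw [← hcover, Finset.sup_eq_biUnion]
    have hMsplit : M = (M \ R) ∪ R := (Finset.sdiff_union_of_subset hR).symm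
    have hLHS : (Finset.range n).sup (fun t => ((u (s t) t : ℝ) : EReal))
        = ((M \ R).sup (fun B => B.sup (fun t => ((u (s t) t : ℝ) : EReal)))) ⊔
          (R.sup (fun B => B.sup (fun t => ((u (s t) t : ℝ) : EReal)))) := by
      rw [hrange, Finset.sup_biUnion]
      conv_lhs => rw [hMsplit]
      rw [Finset.sup_union]
      simp only [id_eq]
    rw [hLHS]
    unfold LF1
    change max _ _ = max _ _
    congr 1
    · refine Finset.sup_congr rfl (fun B hB => ?_)
      rw [Finset.sup_congr rfl (fun t htB => by rw [hsMR B hB t htB])]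
      unfold blockLF
      exact (hginf B hB).symm
    · refine Finset.sup_congr rfl (fun B hB => ?_)
      unfold refLF
      exact Finset.sup_congr rfl (fun t htB => by rw [hsR B hB t htB])
end
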